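/- Let A be a Banach algebra and a, x ∈ A with ax² = x, a²x = axa, and a − axa quasinilpotent. Then (a − axa)ⁿ = aⁿ − axaⁿ for all n ≥ 1, and consequently lim_{n→∞} ‖aⁿ − axaⁿ‖^{1/n} = 0. -/
import Mathlib


open Filter Topology

/-- `q` is quasinilpotent: `‖qⁿ‖^{1/n} → 0`. -/
def Quasinilpotent {A : Type*} [NormedRing A] (q : A) : Prop :=
  Tendsto (fun n : ℕ => ‖q ^ n‖ ^ (1 / (n : ℝ))) atTop (𝓝 0)

/-- If ax² = x, a²x = axa and a − axa is quasinilpotent, then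
(a − axa)ⁿ = aⁿ − axaⁿ for all n ≥ 1, and hence ‖aⁿ − axaⁿ‖^{1/n} → 0. -/
theorem pow_sub_eq_and_tendsto
    {A : Type*} [NormedRing A] [NormedAlgebra ℂ A] [CompleteSpace A]
    (a x : A) (h1 : a * x ^ 2 = x) (h2 : a ^ 2 * x = a * x * a)
    (h3 : Quasinilpotent (a - a * x * a)) :
    (∀ n : ℕ, 1 ≤ n → (a - a * x * a) ^ n = a ^ n - a * x * a ^ n) ∧
      Tendsto (fun n : ℕ => ‖a ^ n - a * x * a ^ n‖ ^ (1 / (n : ℝ))) atTop (𝓝 0) := by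
  have key : ∀ n : ℕ, a ^ (n + 1) * x = a * x * a ^ n := by
    intro n
    induction n with
    | zero => simp
    | succ n ih =>
      calc a ^ (n + 2) * x = a * (a ^ (n + 1) * x) := by
            rw [pow_succ' a (n + 1), mul_assoc]
        _ = a * (a * x * a ^ n) := by rw [ih]
        _ = a ^ 2 * x * a ^ n := by rw [sq]; noncomm_ring
        _ = a * x * a ^ (n + 1) := by rw [h2, pow_succ']; noncomm_ring
  have axax : a * x * (a * x) = a * x := by
    calc a * x * (a * x) = a * x * a * x := by noncomm_ring
      _ = a ^ 2 * x * x := by rw [h2]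
      _ = a * (a * x ^ 2) := by rw [sq, sq]; noncomm_ring
      _ = a * x := by rw [h1]
  have e1 : ∀ n : ℕ, a ^ n * (a * x * a) = a * x * a ^ (n + 1) := by
    intro n
    calc a ^ n * (a * x * a) = a ^ (n + 1) * x * a := by rw [pow_succ]; noncomm_ring
      _ = a * x * a ^ n * a := by rw [key]
      _ = a * x * a ^ (n + 1) := by rw [pow_succ]; noncomm_ring
  have main : ∀ n : ℕ, 1 ≤ n → (a - a * x * a) ^ n = a ^ n - a * x * a ^ n := by
    intro n hn
    induction n with
    | zero => omega
    | succ n ih =>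
      rcases Nat.eq_or_lt_of_le hn with h | h
      · simp [← h]
      · have hn1 : 1 ≤ n := by omega
        have ihn := ih hn1
        have e3 : a * x * a ^ n * (a * x * a) = a * x * a ^ (n + 1) := by
          calc a * x * a ^ n * (a * x * a) = a * x * (a ^ n * (a * x * a)) := by
                noncomm_ring
            _ = a * x * (a * x * a ^ (n + 1)) := by rw [e1]
            _ = a * x * (a * x) * a ^ (n + 1) := by noncomm_ring
            _ = a * x * a ^ (n + 1) := by rw [axax]
        calc (a - a * x * a) ^ (n + 1) = (a - a * x * a) ^ n * (a - a * x * a) := by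
              rw [pow_succ]
          _ = (a ^ n - a * x * a ^ n) * (a - a * x * a) := by rw [ihn]
          _ = a ^ n * a - a ^ n * (a * x * a) - (a * x * a ^ n * a
                - a * x * a ^ n * (a * x * a)) := by noncomm_ring
          _ = a ^ (n + 1) - a * x * a ^ (n + 1) := by
              rw [e1, e3, mul_assoc (a * x), ← pow_succ]
              noncomm_ring
  refine ⟨main, ?_⟩
  refine h3.congr' ?_
  filter_upwards [eventually_ge_atTop 1] with n hn
  rw [main n hn]
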